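/- Ryser's formula: for an N×N complex matrix U, Per(U) = (−1)^N ∑_{S ⊆ {1,...,N}} (−1)^{|S|} ∏_{j=1}^N (∑_{k ∈ S} U_{jk}). -/

import Mathlib

open Finset

/-- The permanent of an `N × N` complex matrix. -/
noncomputable def perm {N : ℕ} (U : Matrix (Fin N) (Fin N) ℂ) : ℂ :=
  ∑ σ : Equiv.Perm (Fin N), ∏ i, U i (σ i)

lemma ryser_key {N : ℕ} (T : Finset (Fin N)) :
    (∑ S : Finset (Fin N), if T ⊆ S then (-1 : ℂ) ^ S.card else 0) =
      if T = Finset.univ then (-1 : ℂ) ^ N else 0 := by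
  classical
  rw [← Finset.sum_filter]
  have hbij : ∑ S ∈ Finset.univ.filter (fun S => T ⊆ S), (-1 : ℂ) ^ S.card
      = ∑ R ∈ Tᶜ.powerset, (-1 : ℂ) ^ (R ∪ T).card := by
    refine Finset.sum_nbij' (fun S => S \ T) (fun R => R ∪ T) ?_ ?_ ?_ ?_ ?_
    · intro S hS
      simp only [Finset.mem_filter] at hS
      simp [Finset.mem_powerset, Finset.subset_iff, Finset.mem_compl,
        Finset.mem_sdiff] at *
    · intro R hR
      simp only [Finset.mem_filter, Finset.mem_univ, true_and]
      exact Finset.subset_union_right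
    · intro S hS
      simp only [Finset.mem_filter] at hS
      exact Finset.sdiff_union_of_subset hS.2
    · intro R hR
      simp only [Finset.mem_powerset] at hR
      show (R ∪ T) \ T = R
      rw [Finset.union_sdiff_right]
      exact Finset.sdiff_eq_self_of_disjoint
        (Finset.disjoint_left.2 fun a ha => by
          have := hR ha; simp [Finset.mem_compl] at this; exact this)
    · intro S hS
      simp only [Finset.mem_filter] at hS
      rw [Finset.sdiff_union_of_subset hS.2]
  rw [hbij]
  have hdisj : ∀ R ∈ Tᶜ.powerset, (R ∪ T).card = R.card + T.card := by
    intro R hR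
    simp only [Finset.mem_powerset] at hR
    exact Finset.card_union_of_disjoint (Finset.disjoint_left.2 fun a ha => by
      have := hR ha; simp [Finset.mem_compl] at this; exact this)
  calc ∑ R ∈ Tᶜ.powerset, (-1 : ℂ) ^ (R ∪ T).card
      = ∑ R ∈ Tᶜ.powerset, (-1 : ℂ) ^ R.card * (-1 : ℂ) ^ T.card := by
        refine Finset.sum_congr rfl fun R hR => ?_
        rw [hdisj R hR, pow_add]
    _ = (∑ R ∈ Tᶜ.powerset, (-1 : ℂ) ^ R.card) * (-1 : ℂ) ^ T.card := by
        rw [Finset.sum_mul]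
    _ = (if T = Finset.univ then (-1 : ℂ) ^ N else 0) := by
        have : (∑ R ∈ Tᶜ.powerset, (-1 : ℂ) ^ R.card)
            = ((∑ R ∈ Tᶜ.powerset, (-1 : ℤ) ^ R.card : ℤ) : ℂ) := by
          push_cast; rfl
        rw [this, Finset.sum_powerset_neg_one_pow_card]
        by_cases h : T = Finset.univ
        · simp [h, Finset.card_univ]
        · have : Tᶜ ≠ ∅ := by
            simp only [ne_eq, Finset.compl_eq_empty_iff]
            exact h
          simp [this, h]

/-- Ryser's formula: the permanent as an inclusion-exclusion sum over subsets
of the column indices. -/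
theorem ryser_formula {N : ℕ} (U : Matrix (Fin N) (Fin N) ℂ) :
    perm U = (-1 : ℂ) ^ N *
      ∑ S : Finset (Fin N), (-1 : ℂ) ^ S.card * ∏ j, (∑ k ∈ S, U j k) := by
  classical
  have step1 : ∀ S : Finset (Fin N),
      (∏ j, ∑ k ∈ S, U j k)
        = ∑ x ∈ Fintype.piFinset (fun _ : Fin N => S), ∏ j, U j (x j) := by
    intro S
    exact Finset.prod_univ_sum (t := fun _ => S) (f := fun j k => U j k)
  have step2 :
      (∑ S : Finset (Fin N), (-1 : ℂ) ^ S.card * ∏ j, (∑ k ∈ S, U j k))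
        = ∑ x : Fin N → Fin N, (∏ j, U j (x j)) *
            ∑ S : Finset (Fin N), (if Finset.image x Finset.univ ⊆ S
              then (-1 : ℂ) ^ S.card else 0) := by
    calc (∑ S : Finset (Fin N), (-1 : ℂ) ^ S.card * ∏ j, (∑ k ∈ S, U j k))
        = ∑ S : Finset (Fin N), ∑ x : Fin N → Fin N,
            (if Finset.image x Finset.univ ⊆ S then (-1 : ℂ) ^ S.card else 0)
              * ∏ j, U j (x j) := by
          refine Finset.sum_congr rfl fun S _ => ?_
          rw [step1 S, Finset.mul_sum]
          have hset : (Fintype.piFinset fun _ : Fin N => S)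
              = Finset.univ.filter (fun x : Fin N → Fin N =>
                  Finset.image x Finset.univ ⊆ S) := by
            ext x
            simp [Fintype.mem_piFinset, Finset.image_subset_iff]
          rw [hset, Finset.sum_filter]
          refine Finset.sum_congr rfl fun x _ => ?_
          split_ifs <;> simp
      _ = ∑ x : Fin N → Fin N, ∑ S : Finset (Fin N),
            (if Finset.image x Finset.univ ⊆ S then (-1 : ℂ) ^ S.card else 0)
              * ∏ j, U j (x j) := Finset.sum_comm
      _ = _ := by
          refine Finset.sum_congr rfl fun x _ => ?_
          rw [← Finset.sum_mul, mul_comm]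
  rw [step2]
  have step3 : ∀ x : Fin N → Fin N,
      (∏ j, U j (x j)) *
          ∑ S : Finset (Fin N), (if Finset.image x Finset.univ ⊆ S
            then (-1 : ℂ) ^ S.card else 0)
        = (if Function.Bijective x then (-1 : ℂ) ^ N * ∏ j, U j (x j) else 0) := by
    intro x
    rw [ryser_key]
    have himg : Finset.image x Finset.univ = Finset.univ ↔ Function.Bijective x := by
      constructor
      · intro h
        have hsurj : Function.Surjective x := by
          intro b
          have : b ∈ Finset.image x Finset.univ := by
            rw [h]; exact Finset.mem_univ b
          simpa using this
        exact (Finite.surjective_iff_bijective).1 hsurj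
      · intro h
        apply Finset.eq_univ_of_card
        rw [Finset.card_image_of_injective _ h.1, Finset.card_univ]
    by_cases h : Function.Bijective x
    · rw [if_pos (himg.2 h), if_pos h, mul_comm]
    · have hne : Finset.image x Finset.univ ≠ Finset.univ :=
        fun hc => h (himg.1 hc)
      rw [if_neg hne, if_neg h, mul_zero]
  rw [Finset.sum_congr rfl fun x _ => step3 x]
  rw [Finset.sum_ite, Finset.sum_const_zero, add_zero]
  rw [← Finset.mul_sum, ← mul_assoc, ← mul_pow, neg_mul_neg, mul_one, one_pow,
    one_mul]
  -- now: perm U = ∑ x ∈ filter Bijective, ∏ j, U j (x j)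
  rw [perm]
  refine Finset.sum_nbij' (fun σ => (σ : Fin N → Fin N))
    (fun x => if h : Function.Bijective x then Equiv.ofBijective x h else 1)
    ?_ ?_ ?_ ?_ ?_
  · intro σ _
    rw [Finset.mem_filter]
    exact ⟨Finset.mem_univ _, σ.bijective⟩
  · intro x hx
    exact Finset.mem_univ _
  · intro σ _
    simp only [Equiv.bijective, dite_true]
    ext i
    simp [Equiv.ofBijective]
  · intro x hx
    simp only [Finset.mem_filter] at hx
    show (⇑(if h : Function.Bijective x then Equiv.ofBijective x h else 1)) = x
    rw [dif_pos hx.2]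
    rfl
  · intro σ _
    rfl
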